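/- Let C ⊆ {0,1,2}^n be a code in which every three distinct codewords triffer in at least one position. Then the family of supports {σ(x) : x ∈ C} (as a multiset) has every set occurring with multiplicity at most 2, and its underlying set family is sunflower-free (contains no three distinct sets A, B, C such that A∩B = B∩C = A∩C). -/
import Mathlib


/-- Three ternary words `a`, `b`, `c` triffer at position `i` if their `i`-th
coordinates take all three values `0, 1, 2`. -/
def Triffers {n : ℕ} (a b c : Fin n → Fin 3) (i : Fin n) : Prop :=
  ({a i, b i, c i} : Finset (Fin 3)) = Finset.univ

instance {n : ℕ} (a b c : Fin n → Fin 3) (i : Fin n) : Decidable (Triffers a b c i) := by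
  unfold Triffers; infer_instance

/-- The number of positions where `a`, `b`, `c` triffer. -/
def trifferCount {n : ℕ} (a b c : Fin n → Fin 3) : ℕ :=
  (Finset.univ.filter fun i => Triffers a b c i).card

/-- A code is `m`-trifferent if every three distinct codewords triffer in at
least `m` positions. -/
def IsTrifferent {n : ℕ} (m : ℕ) (C : Finset (Fin n → Fin 3)) : Prop :=
  ∀ a ∈ C, ∀ b ∈ C, ∀ c ∈ C, a ≠ b → a ≠ c → b ≠ c → m ≤ trifferCount a b c

/-- `T n m` is the maximum size of an `m`-trifferent code of length `n`. -/
noncomputable def T (n m : ℕ) : ℕ :=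
  sSup {k | ∃ C : Finset (Fin n → Fin 3), IsTrifferent m C ∧ C.card = k}

/-- The support of a ternary word. -/
def supp {n : ℕ} (x : Fin n → Fin 3) : Finset (Fin n) :=
  Finset.univ.filter fun i => x i ≠ 0

lemma triff_key : ∀ a b c : Fin 3, ({a,b,c} : Finset (Fin 3)) = Finset.univ →
    (a = 0 ∨ b = 0 ∨ c = 0) ∧ a ≠ b ∧ a ≠ c ∧ b ≠ c := by decide

lemma triff_at {n : ℕ} {C : Finset (Fin n → Fin 3)} (htr : IsTrifferent 1 C)
    {x y z : Fin n → Fin 3} (hx : x ∈ C) (hy : y ∈ C) (hz : z ∈ C)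
    (hxy : x ≠ y) (hxz : x ≠ z) (hyz : y ≠ z) :
    ∃ i, (x i = 0 ∨ y i = 0 ∨ z i = 0) ∧ x i ≠ y i ∧ x i ≠ z i ∧ y i ≠ z i := by
  have h := htr x hx y hy z hz hxy hxz hyz
  rw [trifferCount, Finset.one_le_card] at h
  obtain ⟨i, hi⟩ := h
  simp only [Finset.mem_filter] at hi
  exact ⟨i, triff_key _ _ _ hi.2⟩

theorem stmt18 (n : ℕ) (C : Finset (Fin n → Fin 3)) (htr : IsTrifferent 1 C) :
    (∀ A : Finset (Fin n), (C.filter fun x => supp x = A).card ≤ 2) ∧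
    (∀ A ∈ C.image supp, ∀ B ∈ C.image supp, ∀ D ∈ C.image supp,
      A ≠ B → A ≠ D → B ≠ D → ¬(A ∩ B = B ∩ D ∧ A ∩ B = A ∩ D)) := by
  constructor
  · intro A
    by_contra h
    push_neg at h
    have h3 : 3 ≤ (C.filter fun x => supp x = A).card := h
    obtain ⟨x, hx⟩ : ∃ x, x ∈ (C.filter fun x => supp x = A) :=
      Finset.card_pos.mp (by omega) |>.imp fun _ h => h
    obtain ⟨y, hy⟩ : ∃ y, y ∈ (C.filter fun x => supp x = A).erase x :=
      Finset.card_pos.mp (by rw [Finset.card_erase_of_mem hx]; omega) |>.imp fun _ h => h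
    obtain ⟨z, hz⟩ : ∃ z, z ∈ ((C.filter fun x => supp x = A).erase x).erase y :=
      Finset.card_pos.mp (by
        rw [Finset.card_erase_of_mem hy, Finset.card_erase_of_mem hx]; omega) |>.imp fun _ h => h
    have hzy : z ≠ y := (Finset.mem_erase.mp hz).1
    have hz' := (Finset.mem_erase.mp hz).2
    have hzx : z ≠ x := (Finset.mem_erase.mp hz').1
    have hyx : y ≠ x := (Finset.mem_erase.mp hy).1
    have hxm := Finset.mem_filter.mp hx
    have hym := Finset.mem_filter.mp (Finset.mem_erase.mp hy).2
    have hzm := Finset.mem_filter.mp (Finset.mem_erase.mp hz').2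
    obtain ⟨i, h0, hxy, hxz, hyz⟩ :=
      triff_at htr hxm.1 hym.1 hzm.1 (Ne.symm hyx) (Ne.symm hzx) (Ne.symm hzy)
    have hsupp : ∀ j, (x j ≠ 0 ↔ y j ≠ 0) ∧ (x j ≠ 0 ↔ z j ≠ 0) := by
      intro j
      have e1 : supp x = supp y := hxm.2.trans hym.2.symm
      have e2 : supp x = supp z := hxm.2.trans hzm.2.symm
      constructor
      · have := Finset.ext_iff.mp e1 j; simpa [supp] using this
      · have := Finset.ext_iff.mp e2 j; simpa [supp] using this
    rcases h0 with h0 | h0 | h0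
    · exact ((hsupp i).1.mpr (fun h => hxy (h0.trans h.symm))) h0
    · have : x i ≠ 0 := fun h => hxy (h.trans h0.symm)
      exact ((hsupp i).1.mp this) h0
    · have : x i ≠ 0 := fun h => hxz (h.trans h0.symm)
      exact ((hsupp i).2.mp this) h0
  · rintro A hA B hB D hD hAB hAD hBD ⟨e1, e2⟩
    obtain ⟨x, hxC, hxA⟩ := Finset.mem_image.mp hA
    obtain ⟨y, hyC, hyB⟩ := Finset.mem_image.mp hB
    obtain ⟨z, hzC, hzD⟩ := Finset.mem_image.mp hD
    have hxy : x ≠ y := fun h => hAB (hxA ▸ hyB ▸ h ▸ rfl)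
    have hxz : x ≠ z := fun h => hAD (hxA ▸ hzD ▸ h ▸ rfl)
    have hyz : y ≠ z := fun h => hBD (hyB ▸ hzD ▸ h ▸ rfl)
    obtain ⟨i, h0, hab, hac, hbc⟩ := triff_at htr hxC hyC hzC hxy hxz hyz
    have memA : i ∈ A ↔ x i ≠ 0 := by rw [← hxA]; simp [supp]
    have memB : i ∈ B ↔ y i ≠ 0 := by rw [← hyB]; simp [supp]
    have memD : i ∈ D ↔ z i ≠ 0 := by rw [← hzD]; simp [supp]
    rcases h0 with h0 | h0 | h0
    · have hiB : i ∈ B := memB.mpr (fun h => hab (h0.trans h.symm))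
      have hiD : i ∈ D := memD.mpr (fun h => hac (h0.trans h.symm))
      have : i ∈ A ∩ B := e1 ▸ (Finset.mem_inter.mpr ⟨hiB, hiD⟩)
      exact (memA.mp (Finset.mem_inter.mp this).1) h0
    · have hiA : i ∈ A := memA.mpr (fun h => hab (h.trans h0.symm))
      have hiD : i ∈ D := memD.mpr (fun h => hbc (h0.trans h.symm))
      have : i ∈ A ∩ B := e2 ▸ (Finset.mem_inter.mpr ⟨hiA, hiD⟩)
      exact (memB.mp (Finset.mem_inter.mp this).2) h0
    · have hiA : i ∈ A := memA.mpr (fun h => hac (h.trans h0.symm))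
      have hiB : i ∈ B := memB.mpr (fun h => hbc (h.trans h0.symm))
      have : i ∈ A ∩ D := e2 ▸ (Finset.mem_inter.mpr ⟨hiA, hiB⟩)
      exact (memD.mp (Finset.mem_inter.mp this).2) h0
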